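/- Let b > 0 and define q : ℝ → ℝ by q(p) = exp(−b/p). Fix constants γ_t > 0, A > 0, L > 0, T > 0, T̂ > 0, E_G > 0, c ≥ 0, E ≥ 0, and bounds p^s_min ≤ p^s_max, p^c_min ≤ p^c_max with p^s_min > 0, p^c_min > 0. Define the feasible set S = {(p_s, p_c) : p^s_min ≤ p_s ≤ p^s_max, p^c_min ≤ p_c ≤ p^c_max, A·p_s·L ≥ γ_t, p_s·T + E_G·(p_c·T̂ + c) ≤ E}. Let p_s* = max(p^s_min, γ_t/(A·L)) and p_c* = min(p^c_max, (E − p_s*·T − E_G·c)/(E_G·T̂)), and assume (p_s*, p_c*) ∈ S. Then for every (p_s, p_c) ∈ S, q(p_c) ≤ q(p_c*); that is, (p_s*, p_c*) maximizes the upload success probability q(p_c) over S. -/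
import Mathlib


/-- Closed-form solution of the per-device subproblem: with upload success probability
`q(p) = exp(−b/p)`, sensing-SNR constraint `A·p_s·L ≥ γ_t` and energy budget
`p_s·T + E_G·(p_c·That + c) ≤ E`, the point `(p_s*, p_c*)` with minimal feasible sensing power
and all remaining energy spent on communication maximizes `q(p_c)` over the feasible set. -/
theorem per_device_subproblem_optimal
    (b : ℝ) (hb : 0 < b)
    (q : ℝ → ℝ) (hq : ∀ p : ℝ, q p = Real.exp (-b / p))
    (γt A L T That EG : ℝ) (hγt : 0 < γt) (hA : 0 < A) (hL : 0 < L)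
    (hT : 0 < T) (hThat : 0 < That) (hEG : 0 < EG)
    (c E : ℝ) (hc : 0 ≤ c) (hE : 0 ≤ E)
    (psmin psmax pcmin pcmax : ℝ) (hps : psmin ≤ psmax) (hpc : pcmin ≤ pcmax)
    (hpsmin : 0 < psmin) (hpcmin : 0 < pcmin)
    (S : Set (ℝ × ℝ))
    (hS : S = {p : ℝ × ℝ | psmin ≤ p.1 ∧ p.1 ≤ psmax ∧ pcmin ≤ p.2 ∧ p.2 ≤ pcmax ∧
      γt ≤ A * p.1 * L ∧ p.1 * T + EG * (p.2 * That + c) ≤ E})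
    (psstar pcstar : ℝ)
    (hpsstar : psstar = max psmin (γt / (A * L)))
    (hpcstar : pcstar = min pcmax ((E - psstar * T - EG * c) / (EG * That)))
    (hfeas : (psstar, pcstar) ∈ S) :
    ∀ p ∈ S, q p.2 ≤ q pcstar := by
  subst hS
  obtain ⟨-, -, hstar1, -, -, -⟩ := hfeas
  rintro ⟨ps, pc⟩ ⟨h1, h2, h3, h4, h5, h6⟩
  simp only at *
  have hAL : 0 < A * L := mul_pos hA hL
  have hps' : psstar ≤ ps := by
    rw [hpsstar]
    refine max_le h1 ?_
    rw [div_le_iff₀ hAL]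
    linarith [h5]
  have hEGT : 0 < EG * That := mul_pos hEG hThat
  have hpc' : pc ≤ pcstar := by
    rw [hpcstar]
    refine le_min h4 ?_
    rw [le_div_iff₀ hEGT]
    nlinarith
  have hpcpos : 0 < pc := lt_of_lt_of_le hpcmin h3
  have hpcstarpos : 0 < pcstar := lt_of_lt_of_le hpcmin hstar1
  rw [hq, hq]
  apply Real.exp_le_exp.mpr
  have : b / pcstar ≤ b / pc := by
    apply div_le_div_of_nonneg_left hb.le hpcpos hpc'
  simp only [neg_div]
  linarith
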